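/- For every integer n ≥ 1 and all nonnegative integers a, b, c, the number of inversion sequences e of length n avoiding both patterns 010 and 101 with dist(e) = a, satu(e) = b and zero(e) = c equals the number of inversion sequences e of length n avoiding both patterns 010 and 100 with dist(e) = a, satu(e) = b and zero(e) = c. Consequently, for 1 ≤ k ≤ n, the number of e in I_n(010,100) with rep(e) = k equals the Stirling number of the second kind S(n,k). -/

import Mathlib

/-- An inversion sequence of length `n` (0-indexed): `e i ≤ i` for all `i`. -/
def InvSeq {n : ℕ} (e : Fin n → ℕ) : Prop := ∀ i : Fin n, e i ≤ (i : ℕ)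

/-- `e` contains the pattern `p` (a word of nonnegative integers): there is a
strictly increasing choice of positions on which `e` is order-isomorphic to `p`. -/
def Contains {n : ℕ} (e : Fin n → ℕ) (p : List ℕ) : Prop :=
  ∃ s : Fin p.length → Fin n, StrictMono s ∧
    ∀ a b : Fin p.length,
      (p.get a < p.get b ↔ e (s a) < e (s b)) ∧
      (p.get a = p.get b ↔ e (s a) = e (s b))

/-- `e` avoids the pattern `p`. -/
def Avoids {n : ℕ} (e : Fin n → ℕ) (p : List ℕ) : Prop := ¬ Contains e p

/-- The number of zero entries of `e`. -/
def zeroStat {n : ℕ} (e : Fin n → ℕ) : ℕ :=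
  (Finset.univ.filter (fun i : Fin n => e i = 0)).card

/-- The number of distinct positive values among the entries of `e`. -/
def distStat {n : ℕ} (e : Fin n → ℕ) : ℕ :=
  ((Finset.univ.image e).filter (fun v => 0 < v)).card

/-- The number of repeated entries of `e`: `n - dist e`. -/
def repStat {n : ℕ} (e : Fin n → ℕ) : ℕ := n - distStat e

/-- The number of saturated entries of `e` (1-indexed: `e_i = i - 1`). -/
def satuStat {n : ℕ} (e : Fin n → ℕ) : ℕ :=
  (Finset.univ.filter (fun i : Fin n => e i = (i : ℕ))).card

/-- The Stirling number of the second kind: the number of partitions of an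
`n`-element set into exactly `k` nonempty blocks. -/
noncomputable def stirling2 (n k : ℕ) : ℕ :=
  Nat.card {P : Finpartition (Finset.univ : Finset (Fin n)) // P.parts.card = k}

namespace InvStir

variable {n : ℕ}

/-- runs condition: class of (010,101)-avoiders -/
def CondA (e : Fin n → ℕ) : Prop := ∀ i j k : Fin n, i < j → j < k → e i = e k → e j = e i

/-- repeats-are-max condition : class of (010,100)-avoiders -/
def CondB (e : Fin n → ℕ) : Prop :=
  ∀ k : Fin n, (∃ j, j < k ∧ e j = e k) → ∀ i, i < k → e i ≤ e k

lemma strictMono3 {i j k : Fin n} (hij : i < j) (hjk : j < k) :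
    StrictMono (fun a : Fin 3 => if a = 0 then i else if a = 1 then j else k) := by
  intro a b hab
  fin_cases a <;> fin_cases b <;> simp_all <;> omega

lemma contains3 {e : Fin n → ℕ} {p : List ℕ} (hp : p.length = 3)
    {i j k : Fin n} (hij : i < j) (hjk : j < k)
    (h : ∀ a b : Fin 3,
      ((p.get (Fin.cast hp.symm a) < p.get (Fin.cast hp.symm b)) ↔
        (e (if a = 0 then i else if a = 1 then j else k) < e (if b = 0 then i else if b = 1 then j else k))) ∧
      ((p.get (Fin.cast hp.symm a) = p.get (Fin.cast hp.symm b)) ↔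
        (e (if a = 0 then i else if a = 1 then j else k) = e (if b = 0 then i else if b = 1 then j else k)))) :
    Contains e p := by
  refine ⟨(fun a : Fin 3 => if a = 0 then i else if a = 1 then j else k) ∘ (Fin.cast hp), ?_, ?_⟩
  · intro a b hab
    exact strictMono3 hij hjk (by simpa using hab)
  · intro a b
    have := h (Fin.cast hp a) (Fin.cast hp b)
    simpa using this

lemma avoidA_iff {e : Fin n → ℕ} :
    (Avoids e [0,1,0] ∧ Avoids e [1,0,1]) ↔ CondA e := by
  constructor
  · rintro ⟨h010, h101⟩ i j k hij hjk hik
    by_contra hne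
    rcases lt_or_gt_of_ne (fun h => hne h) with hlt | hgt
    · -- e j < e i : pattern 101
      exact h101 (contains3 (by simp) hij hjk (by
        intro a b
        fin_cases a <;> fin_cases b <;>
          simp_all <;> omega))
    · -- e j > e i : pattern 010
      exact h010 (contains3 (by simp) hij hjk (by
        intro a b
        fin_cases a <;> fin_cases b <;>
          simp_all <;> omega))
  · intro hc
    constructor
    · rintro ⟨s, hs, h⟩
      have h02 := (h ⟨0, by simp⟩ ⟨2, by simp⟩).2
      have h01 := (h ⟨0, by simp⟩ ⟨1, by simp⟩).1
      simp only [List.get] at h02 h01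
      have e02 : e (s ⟨0, by simp⟩) = e (s ⟨2, by simp⟩) := h02.1 trivial
      have e01 : e (s ⟨0, by simp⟩) < e (s ⟨1, by simp⟩) := h01.1 (by norm_num)
      have := hc _ _ _ (hs (show (⟨0, by simp⟩ : Fin 3) < ⟨1, by simp⟩ by simp [Fin.lt_def]))
        (hs (show (⟨1, by simp⟩ : Fin 3) < ⟨2, by simp⟩ by simp [Fin.lt_def])) e02
      omega
    · rintro ⟨s, hs, h⟩
      have h02 := (h ⟨0, by simp⟩ ⟨2, by simp⟩).2
      have h10 := (h ⟨1, by simp⟩ ⟨0, by simp⟩).1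
      simp only [List.get] at h02 h10
      have e02 : e (s ⟨0, by simp⟩) = e (s ⟨2, by simp⟩) := h02.1 trivial
      have e10 : e (s ⟨1, by simp⟩) < e (s ⟨0, by simp⟩) := h10.1 (by norm_num)
      have := hc _ _ _ (hs (show (⟨0, by simp⟩ : Fin 3) < ⟨1, by simp⟩ by simp [Fin.lt_def]))
        (hs (show (⟨1, by simp⟩ : Fin 3) < ⟨2, by simp⟩ by simp [Fin.lt_def])) e02
      omega

lemma avoidB_iff {e : Fin n → ℕ} :
    (Avoids e [0,1,0] ∧ Avoids e [1,0,0]) ↔ CondB e := by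
  constructor
  · rintro ⟨h010, h100⟩ k ⟨j, hjk, hjke⟩ i hik
    by_contra hgt
    push_neg at hgt
    rcases lt_trichotomy i j with hij | rfl | hji
    · -- i < j < k, e i > e k = e j : pattern 100
      exact h100 (contains3 (by simp) hij hjk (by
        intro a b
        fin_cases a <;> fin_cases b <;> simp_all <;> omega))
    · omega
    · -- j < i < k, e j = e k < e i : pattern 010
      exact h010 (contains3 (by simp) hji hik (by
        intro a b
        fin_cases a <;> fin_cases b <;> simp_all <;> omega))
  · intro hc
    constructor
    · rintro ⟨s, hs, h⟩
      have h02 := (h ⟨0, by simp⟩ ⟨2, by simp⟩).2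
      have h01 := (h ⟨0, by simp⟩ ⟨1, by simp⟩).1
      simp only [List.get] at h02 h01
      have e02 : e (s ⟨0, by simp⟩) = e (s ⟨2, by simp⟩) := h02.1 trivial
      have e01 : e (s ⟨0, by simp⟩) < e (s ⟨1, by simp⟩) := h01.1 (by norm_num)
      have h20 : (⟨0, by simp⟩ : Fin 3) < ⟨2, by simp⟩ := by simp [Fin.lt_def]
      have h12 : (⟨1, by simp⟩ : Fin 3) < ⟨2, by simp⟩ := by simp [Fin.lt_def]
      have := hc (s ⟨2, by simp⟩) ⟨s ⟨0, by simp⟩, hs h20, e02⟩ (s ⟨1, by simp⟩) (hs h12)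
      omega
    · rintro ⟨s, hs, h⟩
      have h12 := (h ⟨1, by simp⟩ ⟨2, by simp⟩).2
      have h10 := (h ⟨1, by simp⟩ ⟨0, by simp⟩).1
      simp only [List.get] at h12 h10
      have e12 : e (s ⟨1, by simp⟩) = e (s ⟨2, by simp⟩) := h12.1 trivial
      have e10 : e (s ⟨1, by simp⟩) < e (s ⟨0, by simp⟩) := h10.1 (by norm_num)
      have h02' : (⟨0, by simp⟩ : Fin 3) < ⟨2, by simp⟩ := by simp [Fin.lt_def]
      have h12' : (⟨1, by simp⟩ : Fin 3) < ⟨2, by simp⟩ := by simp [Fin.lt_def]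
      have := hc (s ⟨2, by simp⟩) ⟨s ⟨1, by simp⟩, hs h12', e12⟩ (s ⟨0, by simp⟩) (hs h02')
      omega



def NS (g : Fin n → Option ℕ) : Finset (Fin n) :=
  Finset.univ.filter (fun i => (g i).isSome)

def gval (g : Fin n → Option ℕ) (i : Fin n) : ℕ := (g i).getD 0

def Pgood (g : Fin n → Option ℕ) : Prop :=
  (∀ i : Fin n, ∀ v ∈ g i, v ≤ (i : ℕ) ∧ (v = 0 ↔ (i : ℕ) = 0)) ∧
  (∀ i j : Fin n, (g i).isSome → g i = g j → i = j) ∧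
  (∀ i : Fin n, (i : ℕ) = 0 → (g i).isSome)

lemma mem_NS {g : Fin n → Option ℕ} {i : Fin n} : i ∈ NS g ↔ (g i).isSome := by
  simp [NS]

lemma g_eq_some {g : Fin n → Option ℕ} {i : Fin n} (h : i ∈ NS g) :
    g i = some (gval g i) := by
  rw [mem_NS] at h
  rcases Option.isSome_iff_exists.1 h with ⟨v, hv⟩
  simp [gval, hv]

lemma Pgood.val_le {g : Fin n → Option ℕ} (hg : Pgood g) {i : Fin n} (h : i ∈ NS g) :
    gval g i ≤ (i : ℕ) :=
  (hg.1 i _ (by rw [g_eq_some h]; rfl)).1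

lemma Pgood.val_zero_iff {g : Fin n → Option ℕ} (hg : Pgood g) {i : Fin n} (h : i ∈ NS g) :
    (gval g i = 0 ↔ (i : ℕ) = 0) :=
  (hg.1 i _ (by rw [g_eq_some h]; rfl)).2

lemma Pgood.val_inj {g : Fin n → Option ℕ} (hg : Pgood g) {i j : Fin n}
    (hi : i ∈ NS g) (hj : j ∈ NS g) (hv : gval g i = gval g j) : i = j := by
  refine hg.2.1 i j (mem_NS.1 hi) ?_
  rw [g_eq_some hi, g_eq_some hj, hv]

lemma Pgood.zero_mem {g : Fin n → Option ℕ} (hg : Pgood g) (h : 0 < n) :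
    (⟨0, h⟩ : Fin n) ∈ NS g :=
  mem_NS.2 (hg.2.2 _ rfl)

def isNew (e : Fin n → ℕ) (i : Fin n) : Prop := ∀ j, j < i → e j ≠ e i

instance (e : Fin n → ℕ) (i : Fin n) : Decidable (isNew e i) := by
  unfold isNew; infer_instance

def toG (e : Fin n → ℕ) (i : Fin n) : Option ℕ :=
  if isNew e i then some (e i) else none

lemma mem_NS_toG {e : Fin n → ℕ} {i : Fin n} : i ∈ NS (toG e) ↔ isNew e i := by
  by_cases h : isNew e i <;> simp [mem_NS, toG, h]

lemma gval_toG {e : Fin n → ℕ} {i : Fin n} (h : isNew e i) : gval (toG e) i = e i := by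
  simp [gval, toG, h]

lemma finStrongInd {P : Fin n → Prop} (h : ∀ i, (∀ j, j < i → P j) → P i) : ∀ i, P i := by
  have key : ∀ m : ℕ, ∀ i : Fin n, (i : ℕ) = m → P i := by
    intro m
    induction m using Nat.strong_induction_on with
    | _ m ih =>
      intro i him
      exact h i (fun j hj => ih (j : ℕ) (him ▸ (Fin.lt_def.1 hj)) j rfl)
  intro i; exact key (i : ℕ) i rfl

lemma exists_new_firstOcc (e : Fin n → ℕ) (i : Fin n) :
    ∃ j, j ≤ i ∧ isNew e j ∧ e j = e i := by
  induction i using finStrongInd with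
  | _ i ih =>
    by_cases h : isNew e i
    · exact ⟨i, le_refl _, h, rfl⟩
    · simp only [isNew, not_forall] at h
      rcases h with ⟨j, hj, hje⟩
      rcases ih j hj with ⟨j', hj1, hj2, hj3⟩
      exact ⟨j', le_trans hj1 hj.le, hj2, by rw [hj3]; exact not_ne_iff.1 hje⟩

/-- the last marked position `≤ i` -/
def lastN (g : Fin n → Option ℕ) (i : Fin n) : Fin n :=
  if h : ((NS g) ∩ Finset.Iic i).Nonempty then (NS g ∩ Finset.Iic i).max' h else i

lemma NS_Iic_nonempty {g : Fin n → Option ℕ} (hg : Pgood g) (i : Fin n) :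
    ((NS g) ∩ Finset.Iic i).Nonempty := by
  refine ⟨⟨0, i.pos⟩, ?_⟩
  simp only [Finset.mem_inter, Finset.mem_Iic]
  exact ⟨hg.zero_mem i.pos, by simp [Fin.le_def]⟩

lemma lastN_mem {g : Fin n → Option ℕ} (hg : Pgood g) (i : Fin n) :
    lastN g i ∈ NS g ∧ lastN g i ≤ i := by
  have h := NS_Iic_nonempty hg i
  have := Finset.max'_mem _ h
  simp only [Finset.mem_inter, Finset.mem_Iic] at this
  simpa [lastN, h] using this

lemma le_lastN {g : Fin n → Option ℕ} (hg : Pgood g) {i j : Fin n}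
    (hj : j ∈ NS g) (hji : j ≤ i) : j ≤ lastN g i := by
  have h := NS_Iic_nonempty hg i
  simp only [lastN, h, dif_pos]
  exact Finset.le_max' _ _ (by simp [hj, hji])

lemma lastN_eq_self {g : Fin n → Option ℕ} (hg : Pgood g) {i : Fin n} (hi : i ∈ NS g) :
    lastN g i = i :=
  le_antisymm (lastN_mem hg i).2 (le_lastN hg hi (le_refl _))

lemma lastN_mono {g : Fin n → Option ℕ} (hg : Pgood g) {i j : Fin n} (hij : i ≤ j) :
    lastN g i ≤ lastN g j :=
  le_lastN hg (lastN_mem hg i).1 (le_trans (lastN_mem hg i).2 hij)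

def fromA (g : Fin n → Option ℕ) (i : Fin n) : ℕ := gval g (lastN g i)

def fromB (g : Fin n → Option ℕ) (i : Fin n) : ℕ :=
  (g i).getD (((NS g) ∩ Finset.Iio i).sup (gval g))

def distP (g : Fin n → Option ℕ) : ℕ := (NS g).card - 1

def satuP (g : Fin n → Option ℕ) : ℕ :=
  (Finset.univ.filter (fun i : Fin n => g i = some (i : ℕ))).card

def zeroP (g : Fin n → Option ℕ) : ℕ :=
  (Finset.univ.filter (fun i : Fin n => ∀ j ∈ NS g, j ≤ i → (j : ℕ) = 0)).card


/-! ### Class A : round trips -/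

lemma Pgood_toG {e : Fin n → ℕ} (hs : InvSeq e) : Pgood (toG e) := by
  refine ⟨?_, ?_, ?_⟩
  · intro i v hv
    by_cases h : isNew e i
    · simp only [toG, if_pos h, Option.mem_def, Option.some.injEq] at hv
      subst hv
      refine ⟨hs i, ?_, fun h0 => by have := hs i; omega⟩
      intro hv0
      by_contra h0
      have hpos : (0 : ℕ) < (i : ℕ) := Nat.pos_of_ne_zero h0
      have hz : (⟨0, i.pos⟩ : Fin n) < i := by simpa [Fin.lt_def] using hpos
      have : e ⟨0, i.pos⟩ = 0 := Nat.le_zero.1 (hs ⟨0, i.pos⟩)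
      exact h _ hz (by rw [this, hv0])
    · simp [toG, if_neg h] at hv
  · intro i j hi hij
    by_cases h : isNew e i
    · simp only [toG, if_pos h] at hij
      by_cases h' : isNew e j
      · simp only [toG, if_pos h'] at hij
        rcases lt_trichotomy i j with hlt | he | hgt
        · exact absurd (Option.some.inj hij) (h' i hlt)
        · exact he
        · exact absurd (Option.some.inj hij).symm (h j hgt)
      · simp [toG, if_neg h'] at hij
    · simp [toG, if_neg h] at hi
  · intro i h0
    have : isNew e i := by
      intro j hj
      exact absurd (Fin.lt_def.1 hj) (by omega)
    simp [toG, this]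

lemma isNew_fromA {g : Fin n → Option ℕ} (hg : Pgood g) {i : Fin n} :
    isNew (fromA g) i ↔ i ∈ NS g := by
  constructor
  · intro h
    by_contra hns
    have hne : lastN g i ≠ i := fun he => hns (he ▸ (lastN_mem hg i).1)
    have hlt : lastN g i < i := lt_of_le_of_ne (lastN_mem hg i).2 hne
    refine h _ hlt ?_
    show fromA g (lastN g i) = fromA g i
    unfold fromA
    rw [lastN_eq_self hg (lastN_mem hg i).1]
  · intro hi j hj
    intro he
    have h1 : lastN g j ∈ NS g := (lastN_mem hg j).1
    have h2 : lastN g i = i := lastN_eq_self hg hi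
    unfold fromA at he
    rw [h2] at he
    have := hg.val_inj h1 hi he
    have h3 : lastN g j ≤ j := (lastN_mem hg j).2
    rw [this] at h3
    exact absurd hj (not_lt.2 h3)

lemma condA_fromA {g : Fin n → Option ℕ} (hg : Pgood g) : CondA (fromA g) := by
  intro i j k hij hjk hik
  unfold fromA at *
  have hik' := hg.val_inj (lastN_mem hg i).1 (lastN_mem hg k).1 hik
  have h1 : lastN g i ≤ lastN g j := lastN_mono hg hij.le
  have h2 : lastN g j ≤ lastN g k := lastN_mono hg hjk.le
  rw [← hik'] at h2
  rw [le_antisymm h2 h1]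

lemma invSeq_fromA {g : Fin n → Option ℕ} (hg : Pgood g) : InvSeq (fromA g) := by
  intro i
  calc fromA g i ≤ (lastN g i : ℕ) := hg.val_le (lastN_mem hg i).1
  _ ≤ (i : ℕ) := (lastN_mem hg i).2

lemma toG_fromA {g : Fin n → Option ℕ} (hg : Pgood g) : toG (fromA g) = g := by
  funext i
  by_cases hi : i ∈ NS g
  · rw [toG, if_pos ((isNew_fromA hg).2 hi)]
    rw [show fromA g i = gval g i by unfold fromA; rw [lastN_eq_self hg hi]]
    exact (g_eq_some hi).symm
  · rw [toG, if_neg (fun h => hi ((isNew_fromA hg).1 h))]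
    rw [mem_NS] at hi
    simp [Option.not_isSome_iff_eq_none.1 hi]

lemma fromA_toG {e : Fin n → ℕ} (hs : InvSeq e) (hc : CondA e) : fromA (toG e) = e := by
  have hg : Pgood (toG e) := Pgood_toG hs
  have key : ∀ i : Fin n, ∀ m : Fin n, m ≤ i → isNew e m →
      (∀ j, m < j → j ≤ i → ¬ isNew e j) → e i = e m := by
    intro i
    induction i using finStrongInd with
    | _ i ih =>
      intro m hmi hmn hno
      rcases eq_or_lt_of_le hmi with he | hlt
      · rw [he]
      · have hnotnew : ¬ isNew e i := hno i hlt (le_refl _)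
        simp only [isNew, not_forall] at hnotnew
        rcases hnotnew with ⟨j, hj, hje⟩
        have hje : e j = e i := not_ne_iff.1 hje
        rcases le_or_gt j m with hjm | hmj
        · rcases eq_or_lt_of_le hjm with he' | hlt'
          · rw [← hje, he']
          · rw [← hje]
            exact (hc j m i hlt' hlt hje).symm
        · have hji : e j = e m := ih j hj m hmj.le hmn
            (fun l hml hlj => hno l hml (le_trans hlj hj.le))
          rw [← hje, hji]
  funext i
  have hm := lastN_mem hg i
  have hmn : isNew e (lastN (toG e) i) := mem_NS_toG.1 hm.1
  have : fromA (toG e) i = e (lastN (toG e) i) := gval_toG hmn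
  rw [this]
  exact (key i _ hm.2 hmn (fun j hmj hji hjnew =>
    absurd (le_lastN hg (mem_NS_toG.2 hjnew) hji) (not_le.2 hmj))).symm


/-! ### Class B : round trips -/

lemma fromB_eq_val {g : Fin n → Option ℕ} {i : Fin n} (hi : i ∈ NS g) :
    fromB g i = gval g i := by
  unfold fromB
  rw [g_eq_some hi]
  rfl

lemma fromB_eq_sup {g : Fin n → Option ℕ} {i : Fin n} (hi : i ∉ NS g) :
    fromB g i = ((NS g) ∩ Finset.Iio i).sup (gval g) := by
  unfold fromB
  rw [mem_NS] at hi
  rw [Option.not_isSome_iff_eq_none.1 hi]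
  rfl

lemma pos_of_not_mem_NS {g : Fin n → Option ℕ} (hg : Pgood g) {i : Fin n}
    (hi : i ∉ NS g) : 0 < (i : ℕ) := by
  rcases Nat.eq_zero_or_pos (i : ℕ) with h | h
  · exact absurd (mem_NS.2 (hg.2.2 i h)) hi
  · exact h

lemma NS_Iio_nonempty {g : Fin n → Option ℕ} (hg : Pgood g) {i : Fin n}
    (hi : i ∉ NS g) : ((NS g) ∩ Finset.Iio i).Nonempty := by
  refine ⟨⟨0, i.pos⟩, ?_⟩
  simp only [Finset.mem_inter, Finset.mem_Iio]
  exact ⟨hg.zero_mem i.pos, by simpa [Fin.lt_def] using pos_of_not_mem_NS hg hi⟩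

lemma fromB_attained {g : Fin n → Option ℕ} (hg : Pgood g) {i : Fin n} (hi : i ∉ NS g) :
    ∃ j ∈ (NS g) ∩ Finset.Iio i, fromB g i = gval g j := by
  rw [fromB_eq_sup hi]
  exact Finset.exists_mem_eq_sup _ (NS_Iio_nonempty hg hi) _

lemma fromB_lt_of_not_mem {g : Fin n → Option ℕ} (hg : Pgood g) {i : Fin n} (hi : i ∉ NS g) :
    fromB g i < (i : ℕ) := by
  rcases fromB_attained hg hi with ⟨j, hj, he⟩
  simp only [Finset.mem_inter, Finset.mem_Iio] at hj
  rw [he]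
  exact lt_of_le_of_lt (hg.val_le hj.1) (Fin.lt_def.1 hj.2)

lemma invSeq_fromB {g : Fin n → Option ℕ} (hg : Pgood g) : InvSeq (fromB g) := by
  intro i
  by_cases hi : i ∈ NS g
  · rw [fromB_eq_val hi]; exact hg.val_le hi
  · exact (fromB_lt_of_not_mem hg hi).le

lemma isNew_fromB {g : Fin n → Option ℕ} (hg : Pgood g) {i : Fin n} :
    isNew (fromB g) i ↔ i ∈ NS g := by
  constructor
  · intro h
    by_contra hns
    rcases fromB_attained hg hns with ⟨j, hj, he⟩
    simp only [Finset.mem_inter, Finset.mem_Iio] at hj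
    exact h j hj.2 (by rw [fromB_eq_val hj.1, he])
  · intro hi j hj he
    rw [fromB_eq_val hi] at he
    by_cases hjn : j ∈ NS g
    · rw [fromB_eq_val hjn] at he
      exact absurd (hg.val_inj hjn hi he) hj.ne
    · rcases fromB_attained hg hjn with ⟨j', hj', he'⟩
      simp only [Finset.mem_inter, Finset.mem_Iio] at hj'
      rw [he'] at he
      exact absurd (hg.val_inj hj'.1 hi he) (hj'.2.trans hj).ne

lemma condB_fromB {g : Fin n → Option ℕ} (hg : Pgood g) : CondB (fromB g) := by
  intro k hrep i hik
  have hkns : k ∉ NS g := by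
    intro hk
    rcases hrep with ⟨j, hjk, hje⟩
    have : ¬ isNew (fromB g) k := fun h => h j hjk hje
    exact this ((isNew_fromB hg).2 hk)
  rw [fromB_eq_sup hkns]
  by_cases hi : i ∈ NS g
  · rw [fromB_eq_val hi]
    exact Finset.le_sup (Finset.mem_inter.2 ⟨hi, Finset.mem_Iio.2 hik⟩)
  · rw [fromB_eq_sup hi]
    exact Finset.sup_mono (Finset.inter_subset_inter (subset_refl _) (Finset.Iio_subset_Iio hik.le))

lemma toG_fromB {g : Fin n → Option ℕ} (hg : Pgood g) : toG (fromB g) = g := by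
  funext i
  by_cases hi : i ∈ NS g
  · rw [toG, if_pos ((isNew_fromB hg).2 hi), fromB_eq_val hi]
    exact (g_eq_some hi).symm
  · rw [toG, if_neg (fun h => hi ((isNew_fromB hg).1 h))]
    rw [mem_NS] at hi
    simp [Option.not_isSome_iff_eq_none.1 hi]

lemma fromB_toG {e : Fin n → ℕ} (hc : CondB e) : fromB (toG e) = e := by
  funext i
  by_cases h : isNew e i
  · unfold fromB toG
    rw [if_pos h]
    rfl
  · have hns : i ∉ NS (toG e) := fun hh => h (mem_NS_toG.1 hh)
    rw [fromB_eq_sup hns]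
    simp only [isNew, not_forall] at h
    rcases h with ⟨j, hj, hje⟩
    have hje : e j = e i := not_ne_iff.1 hje
    have hmax : ∀ l, l < i → e l ≤ e i := hc i ⟨j, hj, hje⟩
    apply le_antisymm
    · apply Finset.sup_le
      intro l hl
      simp only [Finset.mem_inter, Finset.mem_Iio] at hl
      rw [gval_toG (mem_NS_toG.1 hl.1)]
      exact hmax l hl.2
    · rcases exists_new_firstOcc e i with ⟨j0, hj0i, hj0n, hj0e⟩
      have hj0lt : j0 < i := lt_of_le_of_ne hj0i (fun he => by
        rw [he] at hj0n; exact absurd hj0n (by simpa [isNew] using ⟨j, hj, hje⟩))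
      calc e i = gval (toG e) j0 := by rw [gval_toG hj0n, hj0e]
      _ ≤ _ := Finset.le_sup (by simp [Finset.mem_inter, mem_NS_toG.2 hj0n, hj0lt])

/-! ### Statistics -/

def distStat' {n : ℕ} (e : Fin n → ℕ) : ℕ :=
  ((Finset.univ.image e).filter (fun v => 0 < v)).card

lemma gval_zero {g : Fin n → Option ℕ} (hg : Pgood g) (h : 0 < n) :
    gval g ⟨0, h⟩ = 0 := (hg.val_zero_iff (hg.zero_mem h)).2 rfl

lemma dist_eq_distP {g : Fin n → Option ℕ} (hg : Pgood g) (hpos : 0 < n)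
    {e : Fin n → ℕ} (him : Finset.univ.image e = (NS g).image (gval g)) :
    distStat' e = distP g := by
  set z : Fin n := ⟨0, hpos⟩ with hz
  have hzval : gval g z = 0 := gval_zero hg hpos
  have key : ((NS g).image (gval g)).filter (fun v => 0 < v)
      = ((NS g).erase z).image (gval g) := by
    ext v
    simp only [Finset.mem_filter, Finset.mem_image, Finset.mem_erase]
    constructor
    · rintro ⟨⟨j, hj, rfl⟩, hv⟩
      exact ⟨j, ⟨fun he => by rw [he, hzval] at hv; exact absurd hv (lt_irrefl _), hj⟩, rfl⟩
    · rintro ⟨j, ⟨hjz, hj⟩, rfl⟩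
      refine ⟨⟨j, hj, rfl⟩, Nat.pos_of_ne_zero ?_⟩
      intro h0
      have : (j : ℕ) = 0 := (hg.val_zero_iff hj).1 h0
      exact hjz (Fin.ext this)
  rw [distStat', him, key, Finset.card_image_of_injOn
    (fun a ha b hb hab => hg.val_inj (Finset.mem_of_mem_erase ha) (Finset.mem_of_mem_erase hb) hab),
    Finset.card_erase_of_mem (hg.zero_mem hpos)]
  rfl

lemma image_fromA {g : Fin n → Option ℕ} (hg : Pgood g) :
    Finset.univ.image (fromA g) = (NS g).image (gval g) := by
  ext v
  simp only [Finset.mem_image, Finset.mem_univ, true_and]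
  constructor
  · rintro ⟨i, rfl⟩
    exact ⟨lastN g i, (lastN_mem hg i).1, rfl⟩
  · rintro ⟨j, hj, rfl⟩
    exact ⟨j, by unfold fromA; rw [lastN_eq_self hg hj]⟩

lemma image_fromB {g : Fin n → Option ℕ} (hg : Pgood g) :
    Finset.univ.image (fromB g) = (NS g).image (gval g) := by
  ext v
  simp only [Finset.mem_image, Finset.mem_univ, true_and]
  constructor
  · rintro ⟨i, rfl⟩
    by_cases hi : i ∈ NS g
    · exact ⟨i, hi, (fromB_eq_val hi).symm⟩
    · rcases fromB_attained hg hi with ⟨j, hj, he⟩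
      exact ⟨j, (Finset.mem_inter.1 hj).1, he.symm⟩
  · rintro ⟨j, hj, rfl⟩
    exact ⟨j, fromB_eq_val hj⟩

lemma satu_fromA {g : Fin n → Option ℕ} (hg : Pgood g) (i : Fin n) :
    fromA g i = (i : ℕ) ↔ g i = some (i : ℕ) := by
  constructor
  · intro h
    have h1 : fromA g i ≤ (lastN g i : ℕ) := hg.val_le (lastN_mem hg i).1
    have h2 : lastN g i ≤ i := (lastN_mem hg i).2
    have : lastN g i = i := Fin.ext (by rw [Fin.le_def] at h2; omega)
    have hi : i ∈ NS g := this ▸ (lastN_mem hg i).1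
    rw [g_eq_some hi]
    congr 1
    rw [← h]
    unfold fromA
    rw [lastN_eq_self hg hi]
  · intro h
    have hi : i ∈ NS g := mem_NS.2 (by simp [h])
    have : gval g i = (i : ℕ) := by simp [gval, h]
    unfold fromA
    rw [lastN_eq_self hg hi, this]

lemma satu_fromB {g : Fin n → Option ℕ} (hg : Pgood g) (i : Fin n) :
    fromB g i = (i : ℕ) ↔ g i = some (i : ℕ) := by
  by_cases hi : i ∈ NS g
  · rw [fromB_eq_val hi, g_eq_some hi]
    constructor
    · intro h; rw [h]
    · intro h; exact (Option.some.inj h)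
  · have h1 : fromB g i < (i : ℕ) := fromB_lt_of_not_mem hg hi
    rw [mem_NS] at hi
    rw [Option.not_isSome_iff_eq_none.1 hi]
    constructor
    · intro h; omega
    · intro h; exact absurd h (by simp)

lemma zero_fromA {g : Fin n → Option ℕ} (hg : Pgood g) (i : Fin n) :
    fromA g i = 0 ↔ ∀ j ∈ NS g, j ≤ i → (j : ℕ) = 0 := by
  constructor
  · intro h j hj hji
    have : (lastN g i : ℕ) = 0 := (hg.val_zero_iff (lastN_mem hg i).1).1 h
    have := le_lastN hg hj hji
    rw [Fin.le_def] at this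
    omega
  · intro h
    have : (lastN g i : ℕ) = 0 := h _ (lastN_mem hg i).1 (lastN_mem hg i).2
    exact (hg.val_zero_iff (lastN_mem hg i).1).2 this

lemma zero_fromB {g : Fin n → Option ℕ} (hg : Pgood g) (i : Fin n) :
    fromB g i = 0 ↔ ∀ j ∈ NS g, j ≤ i → (j : ℕ) = 0 := by
  by_cases hi : i ∈ NS g
  · rw [fromB_eq_val hi]
    constructor
    · intro h j hj hji
      have h0 : (i : ℕ) = 0 := (hg.val_zero_iff hi).1 h
      rw [Fin.le_def] at hji
      omega
    · intro h
      exact (hg.val_zero_iff hi).2 (h i hi (le_refl _))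
  · rw [fromB_eq_sup hi]
    constructor
    · intro h j hj hji
      rcases eq_or_lt_of_le hji with rfl | hlt
      · exact absurd hj hi
      · have : gval g j ≤ 0 := h ▸ Finset.le_sup (Finset.mem_inter.2 ⟨hj, Finset.mem_Iio.2 hlt⟩)
        exact (hg.val_zero_iff hj).1 (Nat.le_zero.1 this)
    · intro h
      apply Nat.le_zero.1
      apply Finset.sup_le
      intro j hj
      simp only [Finset.mem_inter, Finset.mem_Iio] at hj
      have : (j : ℕ) = 0 := h j hj.1 hj.2.le
      exact Nat.le_zero.2 ((hg.val_zero_iff hj.1).2 this)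

/-! ### Assembling part 1 -/

def zeroStat' {n : ℕ} (e : Fin n → ℕ) : ℕ :=
  (Finset.univ.filter (fun i : Fin n => e i = 0)).card

def satuStat' {n : ℕ} (e : Fin n → ℕ) : ℕ :=
  (Finset.univ.filter (fun i : Fin n => e i = (i : ℕ))).card

lemma statsA_eq {g : Fin n → Option ℕ} (hg : Pgood g) (hn : 0 < n) :
    distStat' (fromA g) = distP g ∧ satuStat' (fromA g) = satuP g ∧
      zeroStat' (fromA g) = zeroP g := by
  refine ⟨dist_eq_distP hg hn (image_fromA hg), ?_, ?_⟩
  · unfold satuStat' satuP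
    congr 1
    apply Finset.filter_congr
    intro i _
    exact satu_fromA hg i
  · unfold zeroStat' zeroP
    congr 1
    apply Finset.filter_congr
    intro i _
    exact zero_fromA hg i

lemma statsB_eq {g : Fin n → Option ℕ} (hg : Pgood g) (hn : 0 < n) :
    distStat' (fromB g) = distP g ∧ satuStat' (fromB g) = satuP g ∧
      zeroStat' (fromB g) = zeroP g := by
  refine ⟨dist_eq_distP hg hn (image_fromB hg), ?_, ?_⟩
  · unfold satuStat' satuP
    congr 1
    apply Finset.filter_congr
    intro i _
    exact satu_fromB hg i
  · unfold zeroStat' zeroP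
    congr 1
    apply Finset.filter_congr
    intro i _
    exact zero_fromB hg i

def gequivA (hn : 0 < n) (a b c : ℕ) :
    {e : Fin n → ℕ // InvSeq e ∧ CondA e ∧
        distStat' e = a ∧ satuStat' e = b ∧ zeroStat' e = c} ≃
    {g : Fin n → Option ℕ // Pgood g ∧ distP g = a ∧ satuP g = b ∧ zeroP g = c} where
  toFun e := ⟨toG e.1, by
    obtain ⟨hs, hc, hd, hsa, hz⟩ := e.2
    have hg := Pgood_toG hs
    have he : fromA (toG e.1) = e.1 := fromA_toG hs hc
    obtain ⟨h1, h2, h3⟩ := statsA_eq hg hn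
    rw [he] at h1 h2 h3
    exact ⟨hg, h1 ▸ hd, h2 ▸ hsa, h3 ▸ hz⟩⟩
  invFun g := ⟨fromA g.1, by
    obtain ⟨hg, hd, hsa, hz⟩ := g.2
    obtain ⟨h1, h2, h3⟩ := statsA_eq hg hn
    exact ⟨invSeq_fromA hg, condA_fromA hg, h1 ▸ hd, h2 ▸ hsa, h3 ▸ hz⟩⟩
  left_inv e := Subtype.ext (fromA_toG e.2.1 e.2.2.1)
  right_inv g := Subtype.ext (toG_fromA g.2.1)

def gequivB (hn : 0 < n) (a b c : ℕ) :
    {e : Fin n → ℕ // InvSeq e ∧ CondB e ∧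
        distStat' e = a ∧ satuStat' e = b ∧ zeroStat' e = c} ≃
    {g : Fin n → Option ℕ // Pgood g ∧ distP g = a ∧ satuP g = b ∧ zeroP g = c} where
  toFun e := ⟨toG e.1, by
    obtain ⟨hs, hc, hd, hsa, hz⟩ := e.2
    have hg := Pgood_toG hs
    have he : fromB (toG e.1) = e.1 := fromB_toG hc
    obtain ⟨h1, h2, h3⟩ := statsB_eq hg hn
    rw [he] at h1 h2 h3
    exact ⟨hg, h1 ▸ hd, h2 ▸ hsa, h3 ▸ hz⟩⟩
  invFun g := ⟨fromB g.1, by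
    obtain ⟨hg, hd, hsa, hz⟩ := g.2
    obtain ⟨h1, h2, h3⟩ := statsB_eq hg hn
    exact ⟨invSeq_fromB hg, condB_fromB hg, h1 ▸ hd, h2 ▸ hsa, h3 ▸ hz⟩⟩
  left_inv e := Subtype.ext (fromB_toG e.2.2.1)
  right_inv g := Subtype.ext (toG_fromB g.2.1)

theorem part1 (hn : 0 < n) (a b c : ℕ) :
    Nat.card {e : Fin n → ℕ // InvSeq e ∧ Avoids e [0,1,0] ∧ Avoids e [1,0,1] ∧
        distStat' e = a ∧ satuStat' e = b ∧ zeroStat' e = c}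
      = Nat.card {e : Fin n → ℕ // InvSeq e ∧ Avoids e [0,1,0] ∧ Avoids e [1,0,0] ∧
        distStat' e = a ∧ satuStat' e = b ∧ zeroStat' e = c} := by
  apply Nat.card_congr
  refine Equiv.trans (Equiv.subtypeEquivRight (fun e => ?_))
    (Equiv.trans ((gequivA hn a b c).trans (gequivB hn a b c).symm)
      (Equiv.subtypeEquivRight (fun e => ?_)))
  · constructor
    · rintro ⟨h1, h2, h3, h4⟩
      exact ⟨h1, avoidA_iff.1 ⟨h2, h3⟩, h4⟩
    · rintro ⟨h1, h2, h4⟩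
      exact ⟨h1, (avoidA_iff.2 h2).1, (avoidA_iff.2 h2).2, h4⟩
  · constructor
    · rintro ⟨h1, h2, h4⟩
      exact ⟨h1, (avoidB_iff.2 h2).1, (avoidB_iff.2 h2).2, h4⟩
    · rintro ⟨h1, h2, h3, h4⟩
      exact ⟨h1, avoidB_iff.1 ⟨h2, h3⟩, h4⟩

/-! ### Chain machinery for partitions -/

def chF (g : Fin n → Option ℕ) (y : ℕ) : ℕ :=
  if h : y < n then
    match g ⟨y, h⟩ with
    | some v => if v = y then 0 else v
    | none => y
  else y

def chainN (F : ℕ → ℕ) (y : ℕ) : ℕ :=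
  if h : F y < y then chainN F (F y) else y
termination_by y
decreasing_by exact h

lemma chainN_stop {F : ℕ → ℕ} {y : ℕ} (h : ¬ F y < y) : chainN F y = y := by
  rw [chainN, dif_neg h]

lemma chainN_step {F : ℕ → ℕ} {y : ℕ} (h : F y < y) : chainN F y = chainN F (F y) := by
  rw [chainN, dif_pos h]

lemma chainN_le (F : ℕ → ℕ) : ∀ y, chainN F y ≤ y := by
  intro y
  induction y using Nat.strong_induction_on with
  | _ y ih =>
    by_cases h : F y < y
    · rw [chainN_step h]
      exact le_trans (ih _ h) h.le
    · rw [chainN_stop h]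

lemma chainN_idem (F : ℕ → ℕ) : ∀ y, chainN F (chainN F y) = chainN F y := by
  intro y
  induction y using Nat.strong_induction_on with
  | _ y ih =>
    by_cases h : F y < y
    · rw [chainN_step h]
      exact ih _ h
    · rw [chainN_stop h, chainN_stop h]

def cmap (g : Fin n → Option ℕ) (i : Fin n) : Fin n :=
  ⟨chainN (chF g) (i : ℕ), lt_of_le_of_lt (chainN_le _ _) i.isLt⟩

lemma cmap_le (g : Fin n → Option ℕ) (i : Fin n) : cmap g i ≤ i :=
  chainN_le _ _

lemma chF_lt_n {g : Fin n → Option ℕ} (i : Fin n) :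
    chF g (i : ℕ) = match g i with
    | some v => if v = (i : ℕ) then 0 else v
    | none => (i : ℕ) := by
  unfold chF
  rw [dif_pos i.isLt]

lemma chF_none {g : Fin n → Option ℕ} {i : Fin n} (h : g i = none) :
    chF g (i : ℕ) = (i : ℕ) := by rw [chF_lt_n, h]

lemma chF_fix {g : Fin n → Option ℕ} {i : Fin n} (h : g i = some (i : ℕ)) :
    chF g (i : ℕ) = 0 := by rw [chF_lt_n, h]; simp

lemma chF_some {g : Fin n → Option ℕ} {i : Fin n} {v : ℕ} (h : g i = some v)
    (hv : v ≠ (i : ℕ)) : chF g (i : ℕ) = v := by rw [chF_lt_n, h]; simp [hv]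

lemma cmap_none {g : Fin n → Option ℕ} {i : Fin n} (h : g i = none) :
    cmap g i = i :=
  Fin.ext (chainN_stop (by rw [chF_none h]; exact lt_irrefl _))

lemma cmap_zero {g : Fin n → Option ℕ} (hg : Pgood g) {i : Fin n} (h : (i : ℕ) = 0) :
    cmap g i = i := by
  apply Fin.ext
  apply chainN_stop
  intro hlt
  omega

lemma gval_zero_idx {g : Fin n → Option ℕ} (hg : Pgood g) {i : Fin n} (h : (i : ℕ) = 0) :
    g i = some 0 := by
  have hi : i ∈ NS g := mem_NS.2 (hg.2.2 i h)
  rw [g_eq_some hi, (hg.val_zero_iff hi).2 h]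

/-- first step of the chain for a marked, nonzero position -/
lemma cmap_step {g : Fin n → Option ℕ} (hg : Pgood g) {i : Fin n} (hi : i ∈ NS g)
    (h0 : (i : ℕ) ≠ 0) (hv : gval g i ≠ (i : ℕ)) {p : Fin n} (hp : (p : ℕ) = gval g i) :
    cmap g i = cmap g p := by
  have hvlt : gval g i < (i : ℕ) := lt_of_le_of_ne (hg.val_le hi) hv
  have hF : chF g (i : ℕ) = gval g i := chF_some (g_eq_some hi) hv
  apply Fin.ext
  show chainN (chF g) (i : ℕ) = chainN (chF g) (p : ℕ)
  rw [chainN_step (by rw [hF]; exact hvlt), hF, hp]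

lemma cmap_fix_zero {g : Fin n → Option ℕ} (hg : Pgood g) {i : Fin n} (hi : i ∈ NS g)
    (h0 : (i : ℕ) ≠ 0) (hv : gval g i = (i : ℕ)) : (cmap g i : ℕ) = 0 := by
  have hF : chF g (i : ℕ) = 0 := chF_fix (by rw [g_eq_some hi, hv])
  show chainN (chF g) (i : ℕ) = 0
  rw [chainN_step (by rw [hF]; omega), hF]
  apply chainN_stop
  omega

lemma cmap_lt {g : Fin n → Option ℕ} (hg : Pgood g) {i : Fin n} (hi : i ∈ NS g)
    (h0 : (i : ℕ) ≠ 0) : (cmap g i : ℕ) < (i : ℕ) := by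
  by_cases hv : gval g i = (i : ℕ)
  · rw [cmap_fix_zero hg hi h0 hv]
    omega
  · have hvlt : gval g i < (i : ℕ) := lt_of_le_of_ne (hg.val_le hi) hv
    have hp : ((⟨gval g i, lt_trans hvlt i.isLt⟩ : Fin n) : ℕ) = gval g i := rfl
    rw [cmap_step hg hi h0 hv hp]
    exact lt_of_le_of_lt (chainN_le _ _) hvlt

lemma cmap_eq_self_iff {g : Fin n → Option ℕ} (hg : Pgood g) {i : Fin n} :
    cmap g i = i ↔ (i ∉ NS g ∨ (i : ℕ) = 0) := by
  constructor
  · intro h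
    by_contra hc
    push_neg at hc
    have := cmap_lt hg hc.1 hc.2
    rw [h] at this
    exact lt_irrefl _ this
  · rintro (h | h)
    · rw [mem_NS] at h
      exact cmap_none (Option.not_isSome_iff_eq_none.1 h)
    · exact cmap_zero hg h

lemma cmap_idem (g : Fin n → Option ℕ) (i : Fin n) : cmap g (cmap g i) = cmap g i :=
  Fin.ext (chainN_idem _ _)

/-- the chain from a non-fixed positive marked value never reaches 0 -/
lemma chainN_pos {g : Fin n → Option ℕ} (hg : Pgood g) :
    ∀ y : ℕ, 1 ≤ y → (∀ h : y < n, g ⟨y, h⟩ ≠ some y) → 1 ≤ chainN (chF g) y := by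
  intro y
  induction y using Nat.strong_induction_on with
  | _ y ih =>
    intro hy hnf
    by_cases h : chF g y < y
    · have hyn : y < n := by
        by_contra hn'
        unfold chF at h
        rw [dif_neg hn'] at h
        exact lt_irrefl _ h
      set i : Fin n := ⟨y, hyn⟩ with hidef
      have hiv : (i : ℕ) = y := rfl
      rcases ho : g i with _ | v
      · unfold chF at h
        rw [dif_pos hyn] at h
        rw [show (⟨y, hyn⟩ : Fin n) = i from rfl, ho] at h
        exact absurd h (lt_irrefl _)
      · have hvne : v ≠ y := fun he => hnf hyn (by rw [ho, he])
        have hF : chF g y = v := by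
          have := chF_some (i := i) ho (by rw [hiv]; exact hvne)
          rwa [hiv] at this
        rw [chainN_step h, hF]
        have hi : i ∈ NS g := mem_NS.2 (by simp [ho])
        have hv1 : 1 ≤ v := by
          rcases Nat.eq_zero_or_pos v with h0 | h1
          · have : (i : ℕ) = 0 := (hg.1 i v (by rw [ho]; rfl)).2.1 h0
            omega
          · exact h1
        have hvlt : v < y := by rw [hF] at h; exact h
        refine ih v hvlt hv1 ?_
        intro hvn he
        have : i = ⟨v, hvn⟩ := hg.2.1 i ⟨v, hvn⟩ (by simp [ho]) (by rw [ho, he])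
        have : y = v := congrArg Fin.val this
        omega
    · rw [chainN_stop h]
      exact hy

lemma cmap_pos {g : Fin n → Option ℕ} (hg : Pgood g) {i : Fin n} (hi : i ∈ NS g)
    (h0 : (i : ℕ) ≠ 0) (hv : gval g i ≠ (i : ℕ)) : 1 ≤ (cmap g i : ℕ) := by
  have hvlt : gval g i < (i : ℕ) := lt_of_le_of_ne (hg.val_le hi) hv
  have hp : ((⟨gval g i, lt_trans hvlt i.isLt⟩ : Fin n) : ℕ) = gval g i := rfl
  rw [cmap_step hg hi h0 hv hp]
  show 1 ≤ chainN (chF g) ((⟨gval g i, _⟩ : Fin n) : ℕ)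
  apply chainN_pos hg
  · show 1 ≤ gval g i
    rcases Nat.eq_zero_or_pos (gval g i) with h | h
    · exact absurd ((hg.val_zero_iff hi).1 h) h0
    · exact h
  · intro hlt he
    have : i = ⟨gval g i, hlt⟩ := hg.2.1 i _ (mem_NS.1 hi) (by rw [g_eq_some hi, he])
    have : (i : ℕ) = gval g i := congrArg Fin.val this
    omega

lemma cmap_zero_iff {g : Fin n → Option ℕ} (hg : Pgood g) {i : Fin n} (hi : i ∈ NS g)
    (h0 : (i : ℕ) ≠ 0) : (cmap g i : ℕ) = 0 ↔ gval g i = (i : ℕ) := by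
  constructor
  · intro h
    by_contra hv
    have := cmap_pos hg hi h0 hv
    omega
  · exact cmap_fix_zero hg hi h0

/-! ### Fibers of cmap and the partition -/

def fib (g : Fin n → Option ℕ) (r : Fin n) : Finset (Fin n) :=
  Finset.univ.filter (fun j => cmap g j = r)

lemma mem_fib {g : Fin n → Option ℕ} {r j : Fin n} : j ∈ fib g r ↔ cmap g j = r := by
  simp [fib]

lemma self_mem_fib {g : Fin n → Option ℕ} (i : Fin n) : i ∈ fib g (cmap g i) :=
  mem_fib.2 rfl

lemma cmap_mem_fib {g : Fin n → Option ℕ} (i : Fin n) : cmap g i ∈ fib g (cmap g i) :=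
  mem_fib.2 (cmap_idem g i)

lemma cmap_min_fib {g : Fin n → Option ℕ} {r j : Fin n} (hj : j ∈ fib g r) : r ≤ j := by
  rw [mem_fib] at hj
  rw [← hj]
  exact cmap_le g j

/-- the key pigeonhole lemma: the predecessor value of a marked element is the
largest element of its fiber below it -/
lemma pred_eq_max {g : Fin n → Option ℕ} (hg : Pgood g) {i : Fin n} (hi : i ∈ NS g)
    (h0 : (i : ℕ) ≠ 0) (hv : gval g i ≠ (i : ℕ)) :
    ∀ q ∈ fib g (cmap g i), q < i → (q : ℕ) ≤ gval g i := by
  set r := cmap g i with hr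
  have hvlt : gval g i < (i : ℕ) := lt_of_le_of_ne (hg.val_le hi) hv
  set p : Fin n := ⟨gval g i, lt_trans hvlt i.isLt⟩ with hp
  have hpval : (p : ℕ) = gval g i := rfl
  have hrp : r = cmap g p := cmap_step hg hi h0 hv hpval
  have hrpos : 1 ≤ (r : ℕ) := cmap_pos hg hi h0 hv
  set T : Finset (Fin n) := (fib g r) ∩ Finset.Iio i with hT
  set D : Finset (Fin n) := ((fib g r) ∩ Finset.Iic i).erase r with hD
  have hiT : i ∉ T := by simp [hT]
  have hifib : i ∈ fib g r := self_mem_fib i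
  have hrlti : r < i := lt_of_le_of_lt (hrp ▸ cmap_le g p) (by rw [Fin.lt_def]; exact hvlt)
  have hrT : r ∈ T := by
    simp only [hT, Finset.mem_inter, Finset.mem_Iio]
    exact ⟨cmap_mem_fib i, hrlti⟩
  have hsplit : (fib g r) ∩ Finset.Iic i = insert i T := by
    ext j
    simp only [hT, Finset.mem_inter, Finset.mem_Iic, Finset.mem_insert, Finset.mem_Iio]
    constructor
    · rintro ⟨h1, h2⟩
      rcases eq_or_lt_of_le h2 with h | h
      · exact Or.inl h
      · exact Or.inr ⟨h1, h⟩
    · rintro (rfl | ⟨h1, h2⟩)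
      · exact ⟨hifib, le_refl _⟩
      · exact ⟨h1, h2.le⟩
  have hcardD : D.card = T.card := by
    rw [hD, hsplit, Finset.card_erase_of_mem (by
      rw [hsplit] at *
      exact Finset.mem_insert_of_mem hrT), Finset.card_insert_of_notMem hiT]
    omega
  -- the predecessor map from D to T
  have hnpos : 0 < n := i.pos
  set φ : Fin n → Fin n := fun x => ⟨gval g x % n, Nat.mod_lt _ hnpos⟩ with hφ
  have hDfacts : ∀ x ∈ D, x ∈ NS g ∧ (x : ℕ) ≠ 0 ∧ gval g x ≠ (x : ℕ) ∧ cmap g x = r := by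
    intro x hx
    simp only [hD, Finset.mem_erase, Finset.mem_inter, Finset.mem_Iic] at hx
    obtain ⟨hxr, hxfib, hxi⟩ := hx
    have hcx : cmap g x = r := mem_fib.1 hxfib
    have hxne : cmap g x ≠ x := by rw [hcx]; exact fun h => hxr h.symm
    have h1 : x ∈ NS g ∧ (x : ℕ) ≠ 0 := by
      by_contra hc
      exact hxne ((cmap_eq_self_iff hg).2 (by tauto))
    refine ⟨h1.1, h1.2, ?_, hcx⟩
    intro hfix
    have := cmap_fix_zero hg h1.1 h1.2 hfix
    rw [hcx] at this
    omega
  have hφval : ∀ x ∈ D, (φ x : ℕ) = gval g x := by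
    intro x hx
    show gval g x % n = gval g x
    exact Nat.mod_eq_of_lt (lt_of_le_of_lt (hg.val_le (hDfacts x hx).1) x.isLt)
  have hφmem : ∀ x ∈ D, φ x ∈ T := by
    intro x hx
    obtain ⟨hxNS, hx0, hxfix, hcx⟩ := hDfacts x hx
    have hxi : x ≤ i := by
      simp only [hD, Finset.mem_erase, Finset.mem_inter, Finset.mem_Iic] at hx
      exact hx.2.2
    simp only [hT, Finset.mem_inter, Finset.mem_Iio, mem_fib]
    refine ⟨(cmap_step hg hxNS hx0 hxfix (hφval x hx)).symm.trans hcx, ?_⟩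
    rw [Fin.lt_def, hφval x hx]
    exact lt_of_lt_of_le (lt_of_le_of_ne (hg.val_le hxNS) hxfix) (Fin.le_def.1 hxi)
  have hsurj : ∀ q ∈ T, ∃ x, ∃ hx : x ∈ D, q = φ x := by
    apply Finset.surj_on_of_inj_on_of_card_le (fun x _ => φ x) hφmem
    · intro x y hx hy he
      have : gval g x = gval g y := by
        rw [← hφval x hx, ← hφval y hy, he]
      exact hg.val_inj (hDfacts x hx).1 (hDfacts y hy).1 this
    · rw [hcardD]
  -- now the conclusion
  intro q hq hqi
  have hTne : T.Nonempty := ⟨r, hrT⟩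
  set m := T.max' hTne with hm
  have hmT : m ∈ T := T.max'_mem hTne
  rcases hsurj m hmT with ⟨x, hx, hxe⟩
  have hxD := hx
  simp only [hD, Finset.mem_erase, Finset.mem_inter, Finset.mem_Iic] at hxD
  have hmx : (m : ℕ) = gval g x := by rw [hxe]; exact hφval x hx
  have hxltm : m < x := by
    rw [Fin.lt_def, hmx]
    exact lt_of_le_of_ne (hg.val_le (hDfacts x hx).1) (hDfacts x hx).2.2.1
  have hxi : x = i := by
    by_contra hxi
    have hxT : x ∈ T := by
      simp only [hT, Finset.mem_inter, Finset.mem_Iio]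
      exact ⟨hxD.2.1, lt_of_le_of_ne hxD.2.2 hxi⟩
    exact absurd (T.le_max' x hxT) (not_le.2 hxltm)
  have hqT : q ∈ T := Finset.mem_inter.2 ⟨hq, Finset.mem_Iio.2 hqi⟩
  have hle : (q : ℕ) ≤ (m : ℕ) := Fin.le_def.1 (T.le_max' q hqT)
  rw [hxi] at hmx
  omega

/-! ### The partition associated to a marking -/

def toPart (g : Fin n → Option ℕ) : Finpartition (Finset.univ : Finset (Fin n)) where
  parts := (Finset.univ.image (cmap g)).image (fun r => fib g r)
  supIndep := by
    rw [Finset.supIndep_iff_pairwiseDisjoint]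
    rintro s hs t ht hst
    simp only [Finset.coe_image, Set.mem_image, Finset.mem_coe, Finset.mem_image] at hs ht
    obtain ⟨r1, _, rfl⟩ := hs
    obtain ⟨r2, _, rfl⟩ := ht
    show Disjoint (fib g r1) (fib g r2)
    rw [Finset.disjoint_left]
    intro j hj1 hj2
    rw [mem_fib] at hj1 hj2
    exact hst (by rw [← hj1, ← hj2])
  sup_parts := by
    apply Finset.Subset.antisymm
    · intro j hj
      exact Finset.mem_univ j
    · intro j _
      rw [Finset.mem_sup]
      refine ⟨fib g (cmap g j), ?_, self_mem_fib j⟩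
      apply Finset.mem_image_of_mem
      exact Finset.mem_image_of_mem _ (Finset.mem_univ j)
  bot_notMem := by
    intro h
    obtain ⟨r, hr, he⟩ := Finset.mem_image.1 h
    obtain ⟨j, _, rfl⟩ := Finset.mem_image.1 hr
    have : cmap g j ∈ fib g (cmap g j) := cmap_mem_fib j
    rw [show fib g (cmap g j) = ⊥ from he] at this
    exact absurd this (Finset.notMem_empty _)

lemma toPart_part {g : Fin n → Option ℕ} (i : Fin n) :
    (toPart g).part i = fib g (cmap g i) := by
  apply Finpartition.part_eq_of_mem
  · show fib g (cmap g i) ∈ (Finset.univ.image (cmap g)).image (fun r => fib g r)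
    exact Finset.mem_image_of_mem _ (Finset.mem_image_of_mem _ (Finset.mem_univ i))
  · exact self_mem_fib i

lemma fib_min' {g : Fin n → Option ℕ} (i : Fin n)
    (h : (fib g (cmap g i)).Nonempty) :
    (fib g (cmap g i)).min' h = cmap g i := by
  apply le_antisymm
  · exact Finset.min'_le _ _ (cmap_mem_fib i)
  · exact Finset.le_min' _ _ _ (fun j hj => cmap_min_fib hj)

lemma cmap_image_eq {g : Fin n → Option ℕ} (hg : Pgood g) (hn : 0 < n) :
    Finset.univ.image (cmap g) =
      Finset.univ \ ((NS g).erase ⟨0, hn⟩) := by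
  ext r
  simp only [Finset.mem_image, Finset.mem_univ, true_and, Finset.mem_sdiff,
    Finset.mem_erase, not_and]
  constructor
  · rintro ⟨j, rfl⟩
    intro hne hNS
    rcases (cmap_eq_self_iff hg).1 (cmap_idem g j) with h2 | h2
    · exact h2 hNS
    · exact hne (Fin.ext (by simp [h2]))
  · intro h
    refine ⟨r, ?_⟩
    apply (cmap_eq_self_iff hg).2
    by_cases hNS : r ∈ NS g
    · right
      by_contra h0
      exact (h (fun he => h0 (by rw [he]))) hNS
    · left; exact hNS

lemma toPart_card {g : Fin n → Option ℕ} (hg : Pgood g) (hn : 0 < n) :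
    (toPart g).parts.card = n - ((NS g).card - 1) := by
  have hinj : Set.InjOn (fun r => fib g r) (Finset.univ.image (cmap g)) := by
    intro r1 h1 r2 h2 he
    simp only [Finset.coe_image, Set.mem_image] at h1 h2
    obtain ⟨j1, _, rfl⟩ := h1
    obtain ⟨j2, _, rfl⟩ := h2
    have he' : fib g (cmap g j1) = fib g (cmap g j2) := he
    have : cmap g j1 ∈ fib g (cmap g j2) := by rw [← he']; exact cmap_mem_fib j1
    rw [mem_fib] at this
    rw [← this]
    exact (cmap_idem g j1).symm
  have h1 : (toPart g).parts.card = (Finset.univ.image (cmap g)).card := by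
    show ((Finset.univ.image (cmap g)).image (fun r => fib g r)).card = _
    exact Finset.card_image_of_injOn hinj
  rw [h1, cmap_image_eq hg hn, Finset.card_sdiff_of_subset (Finset.subset_univ _),
    Finset.card_erase_of_mem (hg.zero_mem hn)]
  simp

/-! ### From a partition back to a marking -/

lemma min'_eq_min' {α : Type*} [LinearOrder α] {s t : Finset α} (h : s = t)
    (hs : s.Nonempty) : s.min' hs = t.min' (h ▸ hs) := by subst h; rfl

def pmin (P : Finpartition (Finset.univ : Finset (Fin n))) (i : Fin n) : Fin n :=
  (P.part i).min' ⟨i, P.mem_part (Finset.mem_univ i)⟩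

lemma pmin_mem (P : Finpartition (Finset.univ : Finset (Fin n))) (i : Fin n) :
    pmin P i ∈ P.part i := Finset.min'_mem _ _

lemma pmin_le (P : Finpartition (Finset.univ : Finset (Fin n))) {i j : Fin n}
    (hj : j ∈ P.part i) : pmin P i ≤ j := Finset.min'_le _ _ hj

lemma part_eq_part (P : Finpartition (Finset.univ : Finset (Fin n))) {i j : Fin n}
    (hj : j ∈ P.part i) : P.part j = P.part i :=
  P.part_eq_of_mem (P.part_mem.2 (Finset.mem_univ i)) hj

lemma pmin_eq_pmin (P : Finpartition (Finset.univ : Finset (Fin n))) {i j : Fin n}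
    (hj : j ∈ P.part i) : pmin P j = pmin P i := by
  unfold pmin
  exact min'_eq_min' (part_eq_part P hj) _

def gOf (P : Finpartition (Finset.univ : Finset (Fin n))) (i : Fin n) : Option ℕ :=
  if (i : ℕ) = 0 then some 0
  else if pmin P i = i then none
  else if (pmin P i : ℕ) = 0 then some (i : ℕ)
  else some ((P.part i ∩ Finset.Iio i).sup (fun j => (j : ℕ)))

lemma pmin_lt {P : Finpartition (Finset.univ : Finset (Fin n))} {i : Fin n}
    (h : pmin P i ≠ i) : pmin P i < i :=
  lt_of_le_of_ne (pmin_le P (P.mem_part (Finset.mem_univ i))) h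

lemma partIio_nonempty {P : Finpartition (Finset.univ : Finset (Fin n))} {i : Fin n}
    (h : pmin P i ≠ i) : (P.part i ∩ Finset.Iio i).Nonempty :=
  ⟨pmin P i, Finset.mem_inter.2 ⟨pmin_mem P i, Finset.mem_Iio.2 (pmin_lt h)⟩⟩

lemma supIio_attained {P : Finpartition (Finset.univ : Finset (Fin n))} {i : Fin n}
    (h : pmin P i ≠ i) :
    ∃ j ∈ P.part i ∩ Finset.Iio i,
      ((P.part i ∩ Finset.Iio i).sup (fun j => (j : ℕ))) = (j : ℕ) :=
  Finset.exists_mem_eq_sup _ (partIio_nonempty h) _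

/-- the four branches of `gOf` -/
lemma gOf_cases (P : Finpartition (Finset.univ : Finset (Fin n))) (i : Fin n) :
    ((i : ℕ) = 0 ∧ gOf P i = some 0) ∨
    ((i : ℕ) ≠ 0 ∧ pmin P i = i ∧ gOf P i = none) ∨
    ((i : ℕ) ≠ 0 ∧ pmin P i ≠ i ∧ (pmin P i : ℕ) = 0 ∧ gOf P i = some (i : ℕ)) ∨
    ((i : ℕ) ≠ 0 ∧ pmin P i ≠ i ∧ (pmin P i : ℕ) ≠ 0 ∧
      gOf P i = some ((P.part i ∩ Finset.Iio i).sup (fun j => (j : ℕ)))) := by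
  unfold gOf
  by_cases h0 : (i : ℕ) = 0
  · left; exact ⟨h0, by rw [if_pos h0]⟩
  · by_cases h1 : pmin P i = i
    · right; left; exact ⟨h0, h1, by rw [if_neg h0, if_pos h1]⟩
    · by_cases h2 : (pmin P i : ℕ) = 0
      · right; right; left; exact ⟨h0, h1, h2, by rw [if_neg h0, if_neg h1, if_pos h2]⟩
      · right; right; right; exact ⟨h0, h1, h2, by rw [if_neg h0, if_neg h1, if_neg h2]⟩

lemma sup_lt_self {P : Finpartition (Finset.univ : Finset (Fin n))} {i : Fin n}
    (h : pmin P i ≠ i) :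
    ((P.part i ∩ Finset.Iio i).sup (fun j => (j : ℕ))) < (i : ℕ) := by
  rcases supIio_attained h with ⟨j, hj, he⟩
  rw [he]
  exact Fin.lt_def.1 (Finset.mem_Iio.1 (Finset.mem_inter.1 hj).2)

lemma sup_ge_pmin {P : Finpartition (Finset.univ : Finset (Fin n))} {i : Fin n}
    (h : pmin P i ≠ i) :
    (pmin P i : ℕ) ≤ ((P.part i ∩ Finset.Iio i).sup (fun j => (j : ℕ))) :=
  Finset.le_sup (Finset.mem_inter.2 ⟨pmin_mem P i, Finset.mem_Iio.2 (pmin_lt h)⟩)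

lemma Pgood_gOf (P : Finpartition (Finset.univ : Finset (Fin n))) : Pgood (gOf P) := by
  refine ⟨?_, ?_, ?_⟩
  · intro i v hv
    rcases gOf_cases P i with ⟨h0, he⟩ | ⟨h0, h1, he⟩ | ⟨h0, h1, h2, he⟩ | ⟨h0, h1, h2, he⟩ <;>
      rw [he] at hv
    · rw [Option.mem_def, Option.some.injEq] at hv
      subst hv
      exact ⟨Nat.zero_le _, by simp [h0]⟩
    · exact absurd hv (by simp)
    · rw [Option.mem_def, Option.some.injEq] at hv
      subst hv
      exact ⟨le_refl _, by simp [h0]⟩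
    · rw [Option.mem_def, Option.some.injEq] at hv
      subst hv
      refine ⟨(sup_lt_self h1).le, ?_, fun hc => absurd hc h0⟩
      intro hc
      have := sup_ge_pmin h1
      omega
  · intro i j hi hij
    by_contra hne
    rcases gOf_cases P i with ⟨h0i, hei⟩ | ⟨h0i, h1i, hei⟩ | ⟨h0i, h1i, h2i, hei⟩ |
        ⟨h0i, h1i, h2i, hei⟩ <;>
      rcases gOf_cases P j with ⟨h0j, hej⟩ | ⟨h0j, h1j, hej⟩ | ⟨h0j, h1j, h2j, hej⟩ |
        ⟨h0j, h1j, h2j, hej⟩ <;>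
      rw [hei, hej] at hij <;>
      rw [hei] at hi
    -- 16 cases (i-branch, j-branch)
    · -- (1,1)
      have h := Option.some.inj hij
      exact hne (Fin.ext (by omega))
    · -- (1,2)
      simp at hij
    · -- (1,3)
      have h := Option.some.inj hij
      omega
    · -- (1,4)
      have h := Option.some.inj hij
      have := sup_ge_pmin h1j
      omega
    · -- (2,1)
      simp at hi
    · -- (2,2)
      simp at hi
    · -- (2,3)
      simp at hi
    · -- (2,4)
      simp at hi
    · -- (3,1)
      have h := Option.some.inj hij
      omega
    · -- (3,2)
      simp at hij
    · -- (3,3)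
      exact hne (Fin.ext (Option.some.inj hij))
    · -- (3,4)
      have hq := Option.some.inj hij
      rcases supIio_attained h1j with ⟨jq, hjq, he⟩
      rw [he] at hq
      have hij' : i = jq := Fin.ext hq
      subst hij'
      have hmem := (Finset.mem_inter.1 hjq).1
      have : pmin P i = pmin P j := pmin_eq_pmin P hmem
      rw [this] at h2i
      exact h2j h2i
    · -- (4,1)
      have h := Option.some.inj hij
      have := sup_ge_pmin h1i
      omega
    · -- (4,2)
      simp at hij
    · -- (4,3)
      have hq := (Option.some.inj hij).symm
      rcases supIio_attained h1i with ⟨iq, hiq, he⟩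
      rw [he] at hq
      have hij' : j = iq := Fin.ext hq
      subst hij'
      have hmem := (Finset.mem_inter.1 hiq).1
      have : pmin P j = pmin P i := pmin_eq_pmin P hmem
      rw [this] at h2j
      exact h2i h2j
    · -- (4,4)
      have hq := Option.some.inj hij
      rcases supIio_attained h1i with ⟨iq, hiq, hei'⟩
      rcases supIio_attained h1j with ⟨jq, hjq, hej'⟩
      rw [hei'] at hq
      rw [hej'] at hq
      have : iq = jq := Fin.ext hq
      subst this
      have hpart : P.part i = P.part j := by
        rw [← part_eq_part P (Finset.mem_inter.1 hiq).1,
          part_eq_part P (Finset.mem_inter.1 hjq).1]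
      rcases Fin.lt_or_lt_of_ne hne with hlt | hlt
      · have hi' : i ∈ P.part j ∩ Finset.Iio j := by
          rw [Finset.mem_inter, ← hpart]
          exact ⟨P.mem_part (Finset.mem_univ i), Finset.mem_Iio.2 hlt⟩
        have h2 : (i : ℕ) ≤ (P.part j ∩ Finset.Iio j).sup (fun x : Fin n => (x : ℕ)) :=
          Finset.le_sup (f := fun x : Fin n => (x : ℕ)) hi'
        rw [hej'] at h2
        have h3 : (iq : ℕ) < (i : ℕ) := Fin.lt_def.1 (Finset.mem_Iio.1 (Finset.mem_inter.1 hiq).2)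
        omega
      · have hj' : j ∈ P.part i ∩ Finset.Iio i := by
          rw [Finset.mem_inter, hpart]
          exact ⟨P.mem_part (Finset.mem_univ j), Finset.mem_Iio.2 hlt⟩
        have h2 : (j : ℕ) ≤ (P.part i ∩ Finset.Iio i).sup (fun x : Fin n => (x : ℕ)) :=
          Finset.le_sup (f := fun x : Fin n => (x : ℕ)) hj'
        rw [hei'] at h2
        have h3 : (iq : ℕ) < (j : ℕ) := Fin.lt_def.1 (Finset.mem_Iio.1 (Finset.mem_inter.1 hjq).2)
        omega
  · intro i h0
    rcases gOf_cases P i with ⟨_, he⟩ | ⟨h, _⟩ | ⟨h, _⟩ | ⟨h, _⟩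
    · simp [he]
    all_goals exact absurd h0 h

/-! ### The two round trips and the final equivalence -/

lemma cmap_gOf (P : Finpartition (Finset.univ : Finset (Fin n))) :
    ∀ i : Fin n, cmap (gOf P) i = pmin P i := by
  have hg : Pgood (gOf P) := Pgood_gOf P
  intro i
  induction i using finStrongInd with
  | _ i ih =>
    rcases gOf_cases P i with ⟨h0, he⟩ | ⟨h0, h1, he⟩ | ⟨h0, h1, h2, he⟩ | ⟨h0, h1, h2, he⟩
    · rw [cmap_zero hg h0]
      exact (le_antisymm (pmin_le P (P.mem_part (Finset.mem_univ i)))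
        (by rw [Fin.le_def, h0]; omega)).symm
    · rw [cmap_none he, h1]
    · have hi : i ∈ NS (gOf P) := mem_NS.2 (by simp [he])
      have hv : gval (gOf P) i = (i : ℕ) := by simp [gval, he]
      apply Fin.ext
      rw [cmap_fix_zero hg hi h0 hv, h2]
    · have hi : i ∈ NS (gOf P) := mem_NS.2 (by simp [he])
      have hv : gval (gOf P) i = ((P.part i ∩ Finset.Iio i).sup (fun j => (j : ℕ))) := by
        simp [gval, he]
      rcases supIio_attained h1 with ⟨jq, hjq, hq⟩
      have hjqmem := (Finset.mem_inter.1 hjq).1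
      have hjqlt : jq < i := Finset.mem_Iio.1 (Finset.mem_inter.1 hjq).2
      have hvne : gval (gOf P) i ≠ (i : ℕ) := by
        rw [hv]
        exact Nat.ne_of_lt (sup_lt_self h1)
      have hstep : cmap (gOf P) i = cmap (gOf P) jq :=
        cmap_step hg hi h0 hvne (by rw [hv, hq])
      rw [hstep, ih jq hjqlt, pmin_eq_pmin P hjqmem]

lemma pmin_toPart {g : Fin n → Option ℕ} (i : Fin n) :
    pmin (toPart g) i = cmap g i := by
  unfold pmin
  exact (min'_eq_min' (toPart_part (g := g) i) _).trans (fib_min' i _)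

lemma gOf_toPart {g : Fin n → Option ℕ} (hg : Pgood g) : gOf (toPart g) = g := by
  funext i
  by_cases h0 : (i : ℕ) = 0
  · rw [gval_zero_idx hg h0]
    simp [gOf, h0]
  · by_cases hNS : i ∈ NS g
    · have hlt : (cmap g i : ℕ) < (i : ℕ) := cmap_lt hg hNS h0
      have hne : pmin (toPart g) i ≠ i := by
        rw [pmin_toPart]
        exact fun h => by rw [h] at hlt; omega
      by_cases hfix : gval g i = (i : ℕ)
      · have hz : (pmin (toPart g) i : ℕ) = 0 := by
          rw [pmin_toPart]
          exact cmap_fix_zero hg hNS h0 hfix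
        rw [g_eq_some hNS, hfix]
        simp [gOf, h0, hne, hz]
      · have hz : (pmin (toPart g) i : ℕ) ≠ 0 := by
          rw [pmin_toPart]
          intro hc
          exact hfix ((cmap_zero_iff hg hNS h0).1 hc)
        have hsup : (((toPart g).part i ∩ Finset.Iio i).sup (fun j => (j : ℕ)))
            = gval g i := by
          rw [toPart_part]
          apply le_antisymm
          · apply Finset.sup_le
            intro x hx
            rw [Finset.mem_inter, mem_fib, Finset.mem_Iio] at hx
            exact pred_eq_max hg hNS h0 hfix x (mem_fib.2 hx.1) hx.2
          · have hvlt : gval g i < (i : ℕ) := lt_of_le_of_ne (hg.val_le hNS) hfix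
            set p : Fin n := ⟨gval g i, lt_trans hvlt i.isLt⟩ with hp
            have hpmem : p ∈ fib g (cmap g i) ∩ Finset.Iio i := by
              rw [Finset.mem_inter, mem_fib, Finset.mem_Iio]
              exact ⟨(cmap_step hg hNS h0 hfix rfl).symm, by rw [Fin.lt_def]; exact hvlt⟩
            exact Finset.le_sup (f := fun x : Fin n => (x : ℕ)) hpmem
        rw [g_eq_some hNS, ← hsup]
        simp [gOf, h0, hne, hz]
    · have hself : cmap g i = i := (cmap_eq_self_iff hg).2 (Or.inl hNS)
      have hpm : pmin (toPart g) i = i := by rw [pmin_toPart, hself]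
      rw [mem_NS] at hNS
      rw [Option.not_isSome_iff_eq_none.1 hNS]
      simp [gOf, h0, hpm]

lemma toPart_gOf (P : Finpartition (Finset.univ : Finset (Fin n))) :
    toPart (gOf P) = P := by
  have hc := cmap_gOf P
  have hpart : ∀ i : Fin n, fib (gOf P) (cmap (gOf P) i) = P.part i := by
    intro i
    ext j
    rw [mem_fib, hc i, hc j]
    constructor
    · intro h
      have hpe : P.part j = P.part i :=
        P.eq_of_mem_parts (P.part_mem.2 (Finset.mem_univ j)) (P.part_mem.2 (Finset.mem_univ i))
          (pmin_mem P j) (by rw [h]; exact pmin_mem P i)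
      rw [← hpe]
      exact P.mem_part (Finset.mem_univ j)
    · intro h
      exact pmin_eq_pmin P h
  apply Finpartition.ext
  ext B
  constructor
  · intro hB
    obtain ⟨r, hr, rfl⟩ := Finset.mem_image.1 hB
    obtain ⟨j, _, rfl⟩ := Finset.mem_image.1 hr
    rw [hpart j]
    exact P.part_mem.2 (Finset.mem_univ j)
  · intro hB
    obtain ⟨j, hj⟩ := P.nonempty_of_mem_parts hB
    have : B = P.part j := (P.part_eq_of_mem hB hj).symm
    rw [this, ← hpart j]
    show fib (gOf P) (cmap (gOf P) j) ∈
      (Finset.univ.image (cmap (gOf P))).image (fun r => fib (gOf P) r)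
    exact Finset.mem_image_of_mem _ (Finset.mem_image_of_mem _ (Finset.mem_univ j))

def repStat' {n : ℕ} (e : Fin n → ℕ) : ℕ := n - distStat' e

def gequivB2 (hn : 0 < n) (k : ℕ) :
    {e : Fin n → ℕ // InvSeq e ∧ CondB e ∧ repStat' e = k} ≃
    {g : Fin n → Option ℕ // Pgood g ∧ n - distP g = k} where
  toFun e := ⟨toG e.1, by
    obtain ⟨hs, hc, hr⟩ := e.2
    have hg := Pgood_toG hs
    have he : fromB (toG e.1) = e.1 := fromB_toG hc
    have h1 := (statsB_eq hg hn).1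
    rw [he] at h1
    refine ⟨hg, ?_⟩
    rw [← h1]
    exact hr⟩
  invFun g := ⟨fromB g.1, by
    obtain ⟨hg, hd⟩ := g.2
    have h1 := (statsB_eq hg hn).1
    refine ⟨invSeq_fromB hg, condB_fromB hg, ?_⟩
    unfold repStat'
    rw [h1]
    exact hd⟩
  left_inv e := Subtype.ext (fromB_toG e.2.2.1)
  right_inv g := Subtype.ext (toG_fromB g.2.1)

def gequivPart (hn : 0 < n) (k : ℕ) :
    {g : Fin n → Option ℕ // Pgood g ∧ n - distP g = k} ≃
    {P : Finpartition (Finset.univ : Finset (Fin n)) // P.parts.card = k} where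
  toFun g := ⟨toPart g.1, by
    rw [toPart_card g.2.1 hn]
    exact g.2.2⟩
  invFun P := ⟨gOf P.1, Pgood_gOf P.1, by
    have := toPart_card (Pgood_gOf P.1) hn
    rw [toPart_gOf P.1] at this
    show n - ((NS (gOf P.1)).card - 1) = k
    rw [← this]
    exact P.2⟩
  left_inv g := Subtype.ext (gOf_toPart g.2.1)
  right_inv P := Subtype.ext (toPart_gOf P.1)

theorem part2 (hn : 0 < n) (k : ℕ) :
    Nat.card {e : Fin n → ℕ // InvSeq e ∧ Avoids e [0,1,0] ∧ Avoids e [1,0,0] ∧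
        repStat' e = k}
      = Nat.card {P : Finpartition (Finset.univ : Finset (Fin n)) // P.parts.card = k} := by
  apply Nat.card_congr
  refine Equiv.trans (Equiv.subtypeEquivRight (fun e => ?_))
    ((gequivB2 hn k).trans (gequivPart hn k))
  constructor
  · rintro ⟨h1, h2, h3, h4⟩
    exact ⟨h1, avoidB_iff.1 ⟨h2, h3⟩, h4⟩
  · rintro ⟨h1, h2, h4⟩
    exact ⟨h1, (avoidB_iff.2 h2).1, (avoidB_iff.2 h2).2, h4⟩

end InvStir


theorem stmt_15 (n : ℕ) (hn : 1 ≤ n) :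
    (∀ a b c : ℕ,
      Nat.card {e : Fin n → ℕ // InvSeq e ∧ Avoids e [0,1,0] ∧ Avoids e [1,0,1] ∧
        distStat e = a ∧ satuStat e = b ∧ zeroStat e = c}
      = Nat.card {e : Fin n → ℕ // InvSeq e ∧ Avoids e [0,1,0] ∧ Avoids e [1,0,0] ∧
        distStat e = a ∧ satuStat e = b ∧ zeroStat e = c}) ∧
    (∀ k : ℕ, 1 ≤ k → k ≤ n →
      Nat.card {e : Fin n → ℕ // InvSeq e ∧ Avoids e [0,1,0] ∧ Avoids e [1,0,0] ∧
        repStat e = k} = stirling2 n k) := by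
  constructor
  · intro a b c
    exact InvStir.part1 hn a b c
  · intro k hk1 hk2
    exact InvStir.part2 hn k
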